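/- arXiv:1805.08283 — 3 statements merged into one kernel-verified Lean document; each statement's English description precedes it below -/
import Mathlib

section
/- Let B be standard Brownian motion, n = ab with a, b positive integers and b even. Define the Brownian weighted-BM flat top quantity σ̃²_w = (2b/(a-1))∑_{l=0}^{a-1}(B̄_l(b) - B̄)² - ((b/2)/(2a-1))∑_{l=0}^{2a-1}(B̄_l(b/2) - B̄)². Then E[σ̃²_w] = 1. -/
open MeasureTheory ProbabilityTheory
open scoped NNReal ENNReal

section GaussAux

lemma aux_rpow2 (x : ℝ) : x ^ (2:ℝ) = x ^ 2 := by
  rw [show (2:ℝ) = ((2:ℕ):ℝ) by norm_num, Real.rpow_natCast]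

lemma aux_integrable_sq_exp {b : ℝ} (hb : 0 < b) :
    Integrable (fun x : ℝ => x ^ 2 * Real.exp (-b * x ^ 2)) := by
  have h := integrable_rpow_mul_exp_neg_mul_sq hb (s := 2) (by norm_num)
  have he : (fun x : ℝ => x ^ (2:ℝ) * Real.exp (-b * x ^ 2))
      = fun x : ℝ => x ^ 2 * Real.exp (-b * x ^ 2) := funext fun x => by rw [aux_rpow2]
  rwa [he] at h

open Real in
lemma aux_int_sq_exp {b : ℝ} (hb : 0 < b) :
    ∫ x : ℝ, x ^ 2 * Real.exp (-b * x ^ 2) = b ^ (-(3:ℝ)/2) * (Real.sqrt π / 2) := by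
  have habs : (fun x : ℝ => x ^ 2 * Real.exp (-b * x ^ 2))
      = fun x : ℝ => |x| ^ 2 * Real.exp (-b * |x| ^ 2) := funext fun x => by rw [sq_abs]
  rw [habs, integral_comp_abs (f := fun x : ℝ => x ^ 2 * Real.exp (-b * x ^ 2))]
  have h := integral_rpow_mul_exp_neg_mul_rpow (p := 2) (q := 2) (b := b)
    (by norm_num) (by norm_num) hb
  have hconv : ∫ x in Set.Ioi (0:ℝ), x ^ (2:ℝ) * Real.exp (-b * x ^ (2:ℝ))
      = ∫ x in Set.Ioi (0:ℝ), x ^ 2 * Real.exp (-b * x ^ 2) := by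
    refine setIntegral_congr_fun measurableSet_Ioi fun x _ => ?_
    simp only [aux_rpow2]
  rw [hconv] at h
  rw [h, show ((2:ℝ) + 1) / 2 = 1/2 + 1 by norm_num, Real.Gamma_add_one (by norm_num),
    Real.Gamma_one_half_eq]
  ring_nf

lemma gauss_reduce (v : ℝ≥0) (hv : v ≠ 0) (g : ℝ → ℝ) :
    ∫ x, g x ∂(gaussianReal 0 v) = ∫ x, gaussianPDFReal 0 v x * g x := by
  rw [gaussianReal_of_var_ne_zero _ hv, gaussianPDF_def]
  have e : (fun x => ENNReal.ofReal (gaussianPDFReal 0 v x))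
      = fun x => ((gaussianPDFReal 0 v x).toNNReal : ℝ≥0∞) := rfl
  rw [e, integral_withDensity_eq_integral_smul
    ((measurable_gaussianPDFReal 0 v).real_toNNReal) g]
  refine integral_congr_ae (Filter.Eventually.of_forall fun x => ?_)
  simp only [NNReal.smul_def, smul_eq_mul, Real.coe_toNNReal _ (gaussianPDFReal_nonneg 0 v x)]

lemma gauss_integrable_reduce (v : ℝ≥0) (hv : v ≠ 0) (g : ℝ → ℝ)
    (h : Integrable (fun x => gaussianPDFReal 0 v x * g x)) :
    Integrable g (gaussianReal 0 v) := by
  rw [gaussianReal_of_var_ne_zero _ hv, gaussianPDF_def]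
  have e : (fun x => ENNReal.ofReal (gaussianPDFReal 0 v x))
      = fun x => ((gaussianPDFReal 0 v x).toNNReal : ℝ≥0∞) := rfl
  rw [e, integrable_withDensity_iff_integrable_smul
    ((measurable_gaussianPDFReal 0 v).real_toNNReal)]
  refine h.congr (Filter.Eventually.of_forall fun x => ?_)
  simp only [NNReal.smul_def, smul_eq_mul, Real.coe_toNNReal _ (gaussianPDFReal_nonneg 0 v x)]

open Real in
lemma gauss_pdf_eq (v : ℝ≥0) (hv : v ≠ 0) :
    gaussianPDFReal 0 v = fun x =>
      (Real.sqrt (2 * π * v))⁻¹ * Real.exp (-(2 * (v:ℝ))⁻¹ * x ^ 2) := by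
  funext x
  rw [gaussianPDFReal]
  congr 1
  have hv' : (0:ℝ) < v := lt_of_le_of_ne v.coe_nonneg (by exact_mod_cast (Ne.symm hv))
  field_simp
  rw [sub_zero]

open Real in
lemma gauss_integrable_id (v : ℝ≥0) : Integrable (fun x : ℝ => x) (gaussianReal 0 v) := by
  by_cases hv : v = 0
  · subst hv
    rw [gaussianReal_zero_var]
    exact (integrable_const ((0:ℝ))).congr (ae_eq_dirac (fun x : ℝ => x)).symm
  · have hv' : (0:ℝ) < v := lt_of_le_of_ne v.coe_nonneg (by exact_mod_cast (Ne.symm hv))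
    have hb : (0:ℝ) < (2 * (v:ℝ))⁻¹ := by positivity
    refine gauss_integrable_reduce v hv _ ?_
    have h := (integrable_mul_exp_neg_mul_sq hb).const_mul ((Real.sqrt (2 * π * v))⁻¹)
    refine h.congr (Filter.Eventually.of_forall fun x => ?_)
    rw [gauss_pdf_eq v hv]
    ring

open Real in
lemma gauss_int_id (v : ℝ≥0) : ∫ x, x ∂(gaussianReal 0 v) = 0 := by
  by_cases hv : v = 0
  · subst hv; rw [gaussianReal_zero_var, integral_dirac]
  · rw [gauss_reduce v hv]
    set f := fun x : ℝ => gaussianPDFReal 0 v x * x with hf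
    have hodd : ∀ x, f (-x) = - f x := by
      intro x
      simp only [hf, gauss_pdf_eq v hv]
      ring_nf
    have A : MeasurableEmbedding (fun x : ℝ => -x) :=
      (Homeomorph.neg ℝ).isClosedEmbedding.measurableEmbedding
    have h1 : ∫ x, f x = ∫ x, f (-x) := by
      conv_lhs => rw [← Measure.map_neg_eq_self (volume : Measure ℝ)]
      exact A.integral_map f
    have h2 : ∫ x, f (-x) = - ∫ x, f x := by
      simp only [hodd]
      exact integral_neg f
    linarith [h1, h2]

open Real in
lemma gauss_integrable_sq (v : ℝ≥0) :
    Integrable (fun x : ℝ => x ^ 2) (gaussianReal 0 v) := by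
  by_cases hv : v = 0
  · subst hv
    rw [gaussianReal_zero_var]
    exact (integrable_const ((0:ℝ)^2)).congr (ae_eq_dirac (fun x : ℝ => x ^ 2)).symm
  · have hb : (0:ℝ) < (2 * (v:ℝ))⁻¹ := by
      have hv' : (0:ℝ) < v := lt_of_le_of_ne v.coe_nonneg (by exact_mod_cast (Ne.symm hv))
      positivity
    refine gauss_integrable_reduce v hv _ ?_
    have h := (aux_integrable_sq_exp hb).const_mul ((Real.sqrt (2 * π * v))⁻¹)
    refine h.congr (Filter.Eventually.of_forall fun x => ?_)
    rw [gauss_pdf_eq v hv]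
    ring

open Real in
lemma gauss_int_sq (v : ℝ≥0) : ∫ x, x ^ 2 ∂(gaussianReal 0 v) = v := by
  by_cases hv : v = 0
  · subst hv; rw [gaussianReal_zero_var, integral_dirac]; simp
  · have hv' : (0:ℝ) < v := lt_of_le_of_ne v.coe_nonneg (by exact_mod_cast (Ne.symm hv))
    have hb : (0:ℝ) < (2 * (v:ℝ))⁻¹ := by positivity
    rw [gauss_reduce v hv]
    have e : (fun x => gaussianPDFReal 0 v x * x ^ 2)
        = fun x => (Real.sqrt (2 * π * v))⁻¹ * (x ^ 2 * Real.exp (-(2 * (v:ℝ))⁻¹ * x ^ 2)) := by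
      funext x; rw [gauss_pdf_eq v hv]; ring
    rw [e, integral_const_mul, aux_int_sq_exp hb]
    have h2v : (0:ℝ) < 2 * (v:ℝ) := by positivity
    have h32 : ((2 * (v:ℝ))⁻¹) ^ (-(3:ℝ)/2) = (2 * (v:ℝ)) * Real.sqrt (2 * (v:ℝ)) := by
      rw [show -(3:ℝ)/2 = -(3/2) by norm_num, Real.inv_rpow h2v.le, Real.rpow_neg h2v.le,
        inv_inv, show (3:ℝ)/2 = 1 + 1/2 by norm_num, Real.rpow_add h2v, Real.rpow_one,
        ← Real.sqrt_eq_rpow]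
    rw [h32, show 2 * π * (v:ℝ) = (2 * (v:ℝ)) * π by ring,
      Real.sqrt_mul h2v.le]
    have hs : Real.sqrt (2 * (v:ℝ)) ≠ 0 := by positivity
    have hp : Real.sqrt π ≠ 0 := by positivity
    field_simp

end GaussAux

section Aux

variable {Ω : Type*} [MeasurableSpace Ω] {μ : Measure Ω}

lemma memLp2_integrable_mul {f g : Ω → ℝ} (hf : MemLp f 2 μ) (hg : MemLp g 2 μ) :
    Integrable (fun ω => f ω * g ω) μ := by
  have h : Integrable (fun ω => (((f ω + g ω) ^ 2 - f ω ^ 2) - g ω ^ 2) / 2) μ :=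
    (((hf.add hg).integrable_sq.sub hf.integrable_sq).sub hg.integrable_sq).div_const 2
  refine h.congr (Filter.Eventually.of_forall fun ω => ?_)
  ring

lemma expand_sq3 {X Y Z : Ω → ℝ} (hX : MemLp X 2 μ) (hY : MemLp Y 2 μ) (hZ : MemLp Z 2 μ)
    (iXY : IndepFun X Y μ) (iXZ : IndepFun X Z μ) (iYZ : IndepFun Y Z μ)
    (mX : ∫ ω, X ω ∂μ = 0) (mY : ∫ ω, Y ω ∂μ = 0) (mZ : ∫ ω, Z ω ∂μ = 0)
    (c₁ c₂ c₃ : ℝ) :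
    ∫ ω, (c₁ * X ω + c₂ * Y ω + c₃ * Z ω) ^ 2 ∂μ
      = c₁ ^ 2 * ∫ ω, X ω ^ 2 ∂μ + c₂ ^ 2 * ∫ ω, Y ω ^ 2 ∂μ + c₃ ^ 2 * ∫ ω, Z ω ^ 2 ∂μ := by
  have iX2 : Integrable (fun ω => X ω ^ 2) μ := hX.integrable_sq
  have iY2 : Integrable (fun ω => Y ω ^ 2) μ := hY.integrable_sq
  have iZ2 : Integrable (fun ω => Z ω ^ 2) μ := hZ.integrable_sq
  have iXYi : Integrable (fun ω => X ω * Y ω) μ := memLp2_integrable_mul hX hY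
  have iXZi : Integrable (fun ω => X ω * Z ω) μ := memLp2_integrable_mul hX hZ
  have iYZi : Integrable (fun ω => Y ω * Z ω) μ := memLp2_integrable_mul hY hZ
  have eXY : ∫ ω, X ω * Y ω ∂μ = 0 := by
    have := iXY.integral_mul_eq_mul_integral hX.aestronglyMeasurable hY.aestronglyMeasurable
    rw [show (∫ ω, X ω * Y ω ∂μ) = integral μ (X * Y) from rfl, this, mX, mY, mul_zero]
  have eXZ : ∫ ω, X ω * Z ω ∂μ = 0 := by
    have := iXZ.integral_mul_eq_mul_integral hX.aestronglyMeasurable hZ.aestronglyMeasurable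
    rw [show (∫ ω, X ω * Z ω ∂μ) = integral μ (X * Z) from rfl, this, mX, mZ, mul_zero]
  have eYZ : ∫ ω, Y ω * Z ω ∂μ = 0 := by
    have := iYZ.integral_mul_eq_mul_integral hY.aestronglyMeasurable hZ.aestronglyMeasurable
    rw [show (∫ ω, Y ω * Z ω ∂μ) = integral μ (Y * Z) from rfl, this, mY, mZ, mul_zero]
  have hexp : (fun ω => (c₁ * X ω + c₂ * Y ω + c₃ * Z ω) ^ 2)
      = fun ω => c₁ ^ 2 * X ω ^ 2 + (c₂ ^ 2 * Y ω ^ 2 + (c₃ ^ 2 * Z ω ^ 2 +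
          ((2 * c₁ * c₂) * (X ω * Y ω) + ((2 * c₁ * c₃) * (X ω * Z ω)
            + (2 * c₂ * c₃) * (Y ω * Z ω))))) := funext fun ω => by ring
  rw [hexp]
  have t6 : Integrable (fun ω => 2 * c₂ * c₃ * (Y ω * Z ω)) μ := iYZi.const_mul _
  have t5 : Integrable (fun ω => 2 * c₁ * c₃ * (X ω * Z ω) + 2 * c₂ * c₃ * (Y ω * Z ω)) μ :=
    (iXZi.const_mul _).add t6
  have t4 : Integrable (fun ω => 2 * c₁ * c₂ * (X ω * Y ω)
      + (2 * c₁ * c₃ * (X ω * Z ω) + 2 * c₂ * c₃ * (Y ω * Z ω))) μ := (iXYi.const_mul _).add t5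
  have t3 : Integrable (fun ω => c₃ ^ 2 * Z ω ^ 2 + (2 * c₁ * c₂ * (X ω * Y ω)
      + (2 * c₁ * c₃ * (X ω * Z ω) + 2 * c₂ * c₃ * (Y ω * Z ω)))) μ := (iZ2.const_mul _).add t4
  have t2 : Integrable (fun ω => c₂ ^ 2 * Y ω ^ 2 + (c₃ ^ 2 * Z ω ^ 2 + (2 * c₁ * c₂ * (X ω * Y ω)
      + (2 * c₁ * c₃ * (X ω * Z ω) + 2 * c₂ * c₃ * (Y ω * Z ω))))) μ := (iY2.const_mul _).add t3
  rw [integral_add (iX2.const_mul _) t2, integral_add (iY2.const_mul _) t3,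
    integral_add (iZ2.const_mul _) t4, integral_add (iXYi.const_mul _) t5,
    integral_add (iXZi.const_mul _) t6]
  simp only [integral_const_mul, eXY, eXZ, eYZ]
  ring

end Aux

/-- `B` is a standard one-dimensional Brownian motion under `μ`. -/
def IsStandardBM {Ω : Type*} [MeasurableSpace Ω] (μ : Measure Ω) (B : ℝ → Ω → ℝ) : Prop :=
  IsProbabilityMeasure μ ∧
  (∀ t : ℝ, Measurable (B t)) ∧
  (∀ ω, B 0 ω = 0) ∧
  (∀ s t : ℝ, 0 ≤ s → s ≤ t →
    μ.map (fun ω => B t ω - B s ω) = gaussianReal 0 (Real.toNNReal (t - s))) ∧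
  (∀ (m : ℕ) (t : ℕ → ℝ), Monotone t → (∀ i, 0 ≤ t i) →
    iIndepFun
      (fun i : Fin m => fun ω => B (t (i + 1)) ω - B (t i) ω) μ)

section BMAux

variable {Ω : Type*} [MeasurableSpace Ω] {μ : Measure Ω} {B : ℝ → Ω → ℝ}

lemma bm_memLp (hB : IsStandardBM μ B) {s t : ℝ} (h0 : 0 ≤ s) (h1 : s ≤ t) :
    MemLp (fun ω => B t ω - B s ω) 2 μ := by
  obtain ⟨hprob, hmeas, hzero, hmap, hindep⟩ := hB
  have hX : Measurable (fun ω => B t ω - B s ω) := (hmeas t).sub (hmeas s)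
  have hgl : MemLp (fun x : ℝ => x) 2 (gaussianReal 0 (Real.toNNReal (t - s))) := by
    refine (memLp_two_iff_integrable_sq aestronglyMeasurable_id).mpr ?_
    exact gauss_integrable_sq _
  rw [← hmap s t h0 h1] at hgl
  exact (memLp_map_measure_iff aestronglyMeasurable_id hX.aemeasurable).mp hgl

lemma bm_int_eq_zero (hB : IsStandardBM μ B) {s t : ℝ} (h0 : 0 ≤ s) (h1 : s ≤ t) :
    ∫ ω, (B t ω - B s ω) ∂μ = 0 := by
  obtain ⟨hprob, hmeas, hzero, hmap, hindep⟩ := hB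
  have hX : Measurable (fun ω => B t ω - B s ω) := (hmeas t).sub (hmeas s)
  have h := integral_map (μ := μ) (f := fun x : ℝ => x) hX.aemeasurable aestronglyMeasurable_id
  rw [← h, hmap s t h0 h1, gauss_int_id]

lemma bm_int_sq (hB : IsStandardBM μ B) {s t : ℝ} (h0 : 0 ≤ s) (h1 : s ≤ t) :
    ∫ ω, (B t ω - B s ω) ^ 2 ∂μ = t - s := by
  obtain ⟨hprob, hmeas, hzero, hmap, hindep⟩ := hB
  have hX : Measurable (fun ω => B t ω - B s ω) := (hmeas t).sub (hmeas s)
  have h := integral_map (μ := μ) (f := fun x : ℝ => x ^ 2) hX.aemeasurable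
    (measurable_id.pow_const 2).aestronglyMeasurable
  rw [← h, hmap s t h0 h1, gauss_int_sq, Real.coe_toNNReal _ (sub_nonneg.2 h1)]

/-- auxiliary sequence of four times -/
def seq4 (s₁ t₁ s₂ t₂ : ℝ) : ℕ → ℝ
  | 0 => s₁
  | 1 => t₁
  | 2 => s₂
  | _ => t₂

lemma bm_indep (hB : IsStandardBM μ B) {s₁ t₁ s₂ t₂ : ℝ} (h0 : 0 ≤ s₁) (h1 : s₁ ≤ t₁)
    (h2 : t₁ ≤ s₂) (h3 : s₂ ≤ t₂) :
    IndepFun (fun ω => B t₁ ω - B s₁ ω) (fun ω => B t₂ ω - B s₂ ω) μ := by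
  obtain ⟨hprob, hmeas, hzero, hmap, hindep⟩ := hB
  have hmono : Monotone (seq4 s₁ t₁ s₂ t₂) := by
    apply monotone_nat_of_le_succ
    intro k
    match k with
    | 0 => exact h1
    | 1 => exact h2
    | 2 => exact h3
    | (k+3) => exact le_refl t₂
  have hnonneg : ∀ i, 0 ≤ seq4 s₁ t₁ s₂ t₂ i := by
    intro i
    match i with
    | 0 => exact h0
    | 1 => exact h0.trans h1
    | 2 => exact (h0.trans h1).trans h2
    | (k+3) => exact ((h0.trans h1).trans h2).trans h3
  have h := (hindep 3 (seq4 s₁ t₁ s₂ t₂) hmono hnonneg).indepFun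
    (i := (0 : Fin 3)) (j := (2 : Fin 3)) (by decide)
  simpa [seq4] using h

lemma bm_key (hB : IsStandardBM μ B) {s t N k : ℝ} (h0 : 0 ≤ s) (ht : t = s + k)
    (hk : 0 < k) (h2 : t ≤ N) (hN : 0 < N) :
    ∫ ω, ((B t ω - B s ω) / k - B N ω / N) ^ 2 ∂μ = (N - k) / (k * N) := by
  have h1 : s ≤ t := by rw [ht]; linarith
  have hXm := bm_memLp hB h0 h1
  have hYm := bm_memLp hB le_rfl h0
  have hZm := bm_memLp hB (h0.trans h1) h2
  have iXY : IndepFun (fun ω => B t ω - B s ω) (fun ω => B s ω - B 0 ω) μ :=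
    (bm_indep hB le_rfl h0 le_rfl h1).symm
  have iXZ : IndepFun (fun ω => B t ω - B s ω) (fun ω => B N ω - B t ω) μ :=
    bm_indep hB h0 h1 le_rfl h2
  have iYZ : IndepFun (fun ω => B s ω - B 0 ω) (fun ω => B N ω - B t ω) μ :=
    bm_indep hB le_rfl h0 h1 h2
  have mX := bm_int_eq_zero hB h0 h1
  have mY := bm_int_eq_zero hB le_rfl h0
  have mZ := bm_int_eq_zero hB (h0.trans h1) h2
  have vX := bm_int_sq hB h0 h1
  have vY := bm_int_sq hB le_rfl h0
  have vZ := bm_int_sq hB (h0.trans h1) h2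
  have hzero := hB.2.2.1
  have hpt : ∀ ω, (B t ω - B s ω) / k - B N ω / N
      = (1/k - 1/N) * (B t ω - B s ω) + (-(1/N)) * (B s ω - B 0 ω)
          + (-(1/N)) * (B N ω - B t ω) := by
    intro ω
    rw [hzero ω]
    ring
  have hcalc : ∫ ω, ((B t ω - B s ω) / k - B N ω / N) ^ 2 ∂μ
      = (1/k - 1/N) ^ 2 * (t - s) + (-(1/N)) ^ 2 * (s - 0) + (-(1/N)) ^ 2 * (N - t) := by
    simp only [hpt]
    rw [expand_sq3 hXm hYm hZm iXY iXZ iYZ mX mY mZ, vX, vY, vZ]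
  rw [hcalc, ht]
  have hk' : k ≠ 0 := ne_of_gt hk
  have hN' : N ≠ 0 := ne_of_gt hN
  field_simp
  ring

lemma bm_sq_integrable (hB : IsStandardBM μ B) {s t N k : ℝ} (h0 : 0 ≤ s) (h1 : s ≤ t)
    (hN : 0 ≤ N) :
    Integrable (fun ω => ((B t ω - B s ω) / k - B N ω / N) ^ 2) μ := by
  have hNm : MemLp (fun ω => B N ω) 2 μ := by
    have h := bm_memLp hB le_rfl hN
    have e : (fun ω => B N ω - B 0 ω) = fun ω => B N ω :=
      funext fun ω => by rw [hB.2.2.1 ω, sub_zero]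
    rwa [e] at h
  have hg : MemLp (fun ω => (B t ω - B s ω) / k - B N ω / N) 2 μ := by
    have e : (fun ω => (B t ω - B s ω) / k - B N ω / N)
        = fun ω => (1/k) * (B t ω - B s ω) + (-(1/N)) * B N ω := funext fun ω => by ring
    rw [e]
    exact ((bm_memLp hB h0 h1).const_mul _).add (hNm.const_mul _)
  exact hg.integrable_sq

end BMAux

theorem weighted_bm_flat_top_brownian_expectation
    {Ω : Type*} [MeasurableSpace Ω] (μ : Measure Ω) (B : ℝ → Ω → ℝ)
    (hB : IsStandardBM μ B) (a b : ℕ) (ha : 2 ≤ a) (hb : 2 ≤ b) (hbe : Even b)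
    (n : ℕ) (hn : n = a * b) :
    ∫ ω,
        ((2 * b / ((a : ℝ) - 1)) * ∑ l ∈ Finset.range a,
          ((B ((l * b + b : ℕ) : ℝ) ω - B ((l * b : ℕ) : ℝ) ω) / (b : ℝ)
            - B (n : ℝ) ω / (n : ℝ)) ^ 2
        - (((b : ℝ) / 2) / (2 * (a : ℝ) - 1)) * ∑ l ∈ Finset.range (2 * a),
          ((B ((l * (b / 2) + b / 2 : ℕ) : ℝ) ω - B ((l * (b / 2) : ℕ) : ℝ) ω) / ((b : ℝ) / 2)
            - B (n : ℝ) ω / (n : ℝ)) ^ 2) ∂μ = 1 := by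
  obtain ⟨c, hc⟩ := hbe
  have hbc : b / 2 = c := by omega
  have hc2 : ((b / 2 : ℕ) : ℝ) = (b : ℝ) / 2 := by
    rw [hbc]; rw [hc]; push_cast; ring
  have haR : (2:ℝ) ≤ (a:ℝ) := by exact_mod_cast ha
  have hbR : (2:ℝ) ≤ (b:ℝ) := by exact_mod_cast hb
  have hnR : (n:ℝ) = (a:ℝ) * (b:ℝ) := by rw [hn]; push_cast; ring
  have hnpos : (0:ℝ) < (n:ℝ) := by rw [hnR]; nlinarith
  have hbpos : (0:ℝ) < (b:ℝ) := by linarith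
  -- first family
  set f1 : ℕ → Ω → ℝ := fun l ω =>
    ((B ((l * b + b : ℕ) : ℝ) ω - B ((l * b : ℕ) : ℝ) ω) / (b : ℝ)
      - B (n : ℝ) ω / (n : ℝ)) ^ 2 with hf1
  set f2 : ℕ → Ω → ℝ := fun l ω =>
    ((B ((l * (b / 2) + b / 2 : ℕ) : ℝ) ω - B ((l * (b / 2) : ℕ) : ℝ) ω) / ((b : ℝ) / 2)
      - B (n : ℝ) ω / (n : ℝ)) ^ 2 with hf2
  have hint1 : ∀ l ∈ Finset.range a, Integrable (f1 l) μ := by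
    intro l _
    exact bm_sq_integrable hB (by positivity) (by exact_mod_cast Nat.le_add_right (l*b) b)
      hnpos.le
  have hint2 : ∀ l ∈ Finset.range (2 * a), Integrable (f2 l) μ := by
    intro l _
    exact bm_sq_integrable hB (by positivity)
      (by exact_mod_cast Nat.le_add_right (l*(b/2)) (b/2)) hnpos.le
  have hval1 : ∀ l ∈ Finset.range a, ∫ ω, f1 l ω ∂μ = ((n:ℝ) - b) / ((b:ℝ) * n) := by
    intro l hl
    rw [Finset.mem_range] at hl
    refine bm_key hB (by positivity) (by push_cast; ring) hbpos ?_ hnpos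
    have : l * b + b ≤ n := by
      rw [hn]
      calc l * b + b = (l + 1) * b := by ring
      _ ≤ a * b := Nat.mul_le_mul_right b hl
    exact_mod_cast this
  have hval2 : ∀ l ∈ Finset.range (2 * a), ∫ ω, f2 l ω ∂μ
      = ((n:ℝ) - (b:ℝ)/2) / (((b:ℝ)/2) * n) := by
    intro l hl
    rw [Finset.mem_range] at hl
    refine bm_key hB (by positivity) ?_ (by linarith) ?_ hnpos
    · push_cast [hc2]; ring
    · have : l * (b/2) + b/2 ≤ n := by
        rw [hn, hbc]
        calc l * c + c = (l + 1) * c := by ring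
        _ ≤ (2 * a) * c := Nat.mul_le_mul_right c hl
        _ = a * b := by rw [hc]; ring
      exact_mod_cast this
  have hS1 : Integrable (fun ω => ∑ l ∈ Finset.range a, f1 l ω) μ :=
    integrable_finset_sum _ hint1
  have hS2 : Integrable (fun ω => ∑ l ∈ Finset.range (2 * a), f2 l ω) μ :=
    integrable_finset_sum _ hint2
  rw [integral_sub (hS1.const_mul _) (hS2.const_mul _), integral_const_mul, integral_const_mul,
    integral_finset_sum _ hint1, integral_finset_sum _ hint2,
    Finset.sum_congr rfl hval1, Finset.sum_congr rfl hval2,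
    Finset.sum_const, Finset.sum_const, Finset.card_range, Finset.card_range]
  have ha1 : (a:ℝ) - 1 ≠ 0 := by linarith
  have ha2 : 2 * (a:ℝ) - 1 ≠ 0 := by linarith
  have hb0 : (b:ℝ) ≠ 0 := ne_of_gt hbpos
  have hn0 : (n:ℝ) ≠ 0 := ne_of_gt hnpos
  rw [nsmul_eq_mul, nsmul_eq_mul, hnR]
  push_cast
  field_simp
  ring
end

section
/- Under nonoverlapping-batch covariance structure (batches with batch size b): nonoverlapping batch means Z₁ = B̄_p(b) - B̄ and Z₂ = B̄_q(b) - B̄ with p ≠ q are jointly Gaussian with E[Z₁²Z₂²] = 3/n² + 1/b² - 2/(bn), whence summing over all ordered pairs, E[(∑_{l=0}^{a-1}(B̄_l(b)-B̄)²)²] = 3a((n-b)/(bn))² + a(a-1)(3/n² + 1/b² - 2/(bn)), where n = ab. -/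
open MeasureTheory ProbabilityTheory

open Real
open scoped NNReal ENNReal
set_option maxHeartbeats 1000000
set_option linter.unusedVariables false
set_option linter.unreachableTactic false
set_option linter.unusedTactic false
set_option linter.unnecessarySimpa false

noncomputable section

def gm (v : ℝ) : ℕ → ℝ
  | 0 => 1 | 1 => 0 | 2 => v | 3 => 0 | 4 => 3 * v ^ 2 | _ => 0

lemma integrable_pow_mul_exp {c : ℝ} (hc : 0 < c) (j : ℕ) :
    Integrable (fun x : ℝ => x ^ j * rexp (-c * x ^ 2)) := by
  have h := integrable_rpow_mul_exp_neg_mul_sq hc (s := (j : ℝ))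
    (by have : (0:ℝ) ≤ j := Nat.cast_nonneg j; linarith)
  simpa [Real.rpow_natCast] using h

lemma J_rec {c : ℝ} (hc : 0 < c) (j : ℕ) :
    ((j : ℝ) + 1) * ∫ x : ℝ, x ^ j * rexp (-c * x ^ 2) =
      2 * c * ∫ x : ℝ, x ^ (j + 2) * rexp (-c * x ^ 2) := by
  have hderiv : ∀ x : ℝ, HasDerivAt (fun x : ℝ => x ^ (j + 1) * rexp (-c * x ^ 2))
      (((j : ℝ) + 1) * (x ^ j * rexp (-c * x ^ 2))
        - 2 * c * (x ^ (j + 2) * rexp (-c * x ^ 2))) x := by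
    intro x
    have h1 : HasDerivAt (fun x : ℝ => -c * x ^ 2) (-c * (2 * x ^ 1)) x :=
      (hasDerivAt_pow 2 x).const_mul (-c)
    have h2 := h1.exp
    have h3 : HasDerivAt (fun x : ℝ => x ^ (j + 1) * rexp (-c * x ^ 2)) _ x := (hasDerivAt_pow (j + 1) x).mul h2
    convert h3 using 1
    push_cast
    ring
  have h0 := integral_eq_zero_of_hasDerivAt_of_integrable hderiv
    ((((integrable_pow_mul_exp hc j).const_mul _)).sub
      ((integrable_pow_mul_exp hc (j + 2)).const_mul _))
    (integrable_pow_mul_exp hc (j + 1))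
  rw [integral_sub ((integrable_pow_mul_exp hc j).const_mul _)
    ((integrable_pow_mul_exp hc (j + 2)).const_mul _),
    integral_const_mul, integral_const_mul, sub_eq_zero] at h0
  exact h0

lemma J_one {c : ℝ} (hc : 0 < c) : ∫ x : ℝ, x ^ 1 * rexp (-c * x ^ 2) = 0 := by
  have hderiv : ∀ x : ℝ, HasDerivAt (fun x : ℝ => rexp (-c * x ^ 2))
      ((-2 * c) * (x ^ 1 * rexp (-c * x ^ 2))) x := by
    intro x
    have h1 : HasDerivAt (fun x : ℝ => -c * x ^ 2) (-c * (2 * x ^ 1)) x :=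
      (hasDerivAt_pow 2 x).const_mul (-c)
    have h2 := h1.exp
    convert h2 using 1
    ring
  have h0 := integral_eq_zero_of_hasDerivAt_of_integrable hderiv
    ((integrable_pow_mul_exp hc 1).const_mul _)
    (by simpa using integrable_pow_mul_exp hc 0)
  rw [integral_const_mul] at h0
  have hne : (-2 : ℝ) * c ≠ 0 := by nlinarith
  exact (mul_eq_zero.1 h0).resolve_left hne

section gauss
variable {v : ℝ≥0}

lemma integral_gaussianReal_transfer (hv : v ≠ 0) (g : ℝ → ℝ) :
    ∫ x, g x ∂(gaussianReal 0 v) = ∫ x, gaussianPDFReal 0 v x * g x := by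
  rw [gaussianReal_of_var_ne_zero 0 hv]
  have h1 : gaussianPDF 0 v = fun x => ((Real.toNNReal (gaussianPDFReal 0 v x) : ℝ≥0) : ℝ≥0∞) := by
    funext x; rfl
  rw [h1, integral_withDensity_eq_integral_smul
    ((measurable_gaussianPDFReal 0 v).real_toNNReal) g]
  congr 1
  funext x
  rw [NNReal.smul_def, Real.coe_toNNReal _ (gaussianPDFReal_nonneg 0 v x), smul_eq_mul]

lemma gaussianPDFReal_zero_eq (hv : v ≠ 0) : gaussianPDFReal 0 v = fun x =>
    (Real.sqrt (2 * Real.pi * v))⁻¹ * rexp (-(2 * (v:ℝ))⁻¹ * x ^ 2) := by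
  have hv' : (0:ℝ) < v := NNReal.coe_pos.mpr (pos_iff_ne_zero.mpr hv)
  funext x
  rw [gaussianPDFReal]
  congr 1
  field_simp
  simp

lemma integrable_pow_gaussianReal (v : ℝ≥0) (k : ℕ) :
    Integrable (fun x : ℝ => x ^ k) (gaussianReal 0 v) := by
  by_cases hv : v = 0
  · subst hv
    rw [gaussianReal_zero_var]
    refine ⟨(measurable_id.pow_const k).aestronglyMeasurable, ?_⟩
    rw [HasFiniteIntegral, lintegral_dirac' _ (by measurability)]
    exact ENNReal.coe_lt_top
  · have hv' : (0:ℝ) < v := NNReal.coe_pos.mpr (pos_iff_ne_zero.mpr hv)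
    have hc : (0:ℝ) < (2 * (v:ℝ))⁻¹ := by positivity
    rw [gaussianReal_of_var_ne_zero 0 hv]
    have h1 : gaussianPDF 0 v = fun x => ((Real.toNNReal (gaussianPDFReal 0 v x) : ℝ≥0) : ℝ≥0∞) := by
      funext x; rfl
    rw [h1, integrable_withDensity_iff_integrable_smul
      ((measurable_gaussianPDFReal 0 v).real_toNNReal)]
    have hi : Integrable (fun x : ℝ =>
        (Real.sqrt (2 * Real.pi * v))⁻¹ * (x ^ k * rexp (-(2 * (v:ℝ))⁻¹ * x ^ 2))) :=
      (integrable_pow_mul_exp hc k).const_mul _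
    apply hi.congr
    filter_upwards with x
    rw [NNReal.smul_def, Real.coe_toNNReal _ (gaussianPDFReal_nonneg 0 v x), smul_eq_mul,
      gaussianPDFReal_zero_eq hv]
    ring

lemma integral_pow_gaussianReal (v : ℝ≥0) {k : ℕ} (hk : k ≤ 4) :
    ∫ x, x ^ k ∂(gaussianReal 0 v) = gm v k := by
  by_cases hv : v = 0
  · subst hv
    rw [gaussianReal_zero_var, integral_dirac]
    interval_cases k <;> simp [gm]
  · have hv' : (0:ℝ) < v := NNReal.coe_pos.mpr (pos_iff_ne_zero.mpr hv)
    set c : ℝ := (2 * (v:ℝ))⁻¹ with hcdef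
    have hc : (0:ℝ) < c := by positivity
    set K : ℝ := (Real.sqrt (2 * Real.pi * v))⁻¹ with hKdef
    have htrans : ∀ m : ℕ, ∫ x, x ^ m ∂(gaussianReal 0 v)
        = K * ∫ x : ℝ, x ^ m * rexp (-c * x ^ 2) := by
      intro m
      rw [integral_gaussianReal_transfer hv, gaussianPDFReal_zero_eq hv]
      rw [show (fun x : ℝ => K * rexp (-c * x ^ 2) * x ^ m)
        = fun x : ℝ => K * (x ^ m * rexp (-c * x ^ 2)) by funext x; ring]
      rw [integral_const_mul]
    obtain ⟨I0, hI0⟩ : ∃ r, ∫ x : ℝ, x ^ 0 * rexp (-c * x ^ 2) = r := ⟨_, rfl⟩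
    obtain ⟨I1, hI1⟩ : ∃ r, ∫ x : ℝ, x ^ 1 * rexp (-c * x ^ 2) = r := ⟨_, rfl⟩
    obtain ⟨I2, hI2⟩ : ∃ r, ∫ x : ℝ, x ^ 2 * rexp (-c * x ^ 2) = r := ⟨_, rfl⟩
    obtain ⟨I3, hI3⟩ : ∃ r, ∫ x : ℝ, x ^ 3 * rexp (-c * x ^ 2) = r := ⟨_, rfl⟩
    obtain ⟨I4, hI4⟩ : ∃ r, ∫ x : ℝ, x ^ 4 * rexp (-c * x ^ 2) = r := ⟨_, rfl⟩
    have hcv : 2 * c * (v:ℝ) = 1 := by rw [hcdef]; field_simp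
    have h0 : K * I0 = 1 := by
      have h := integral_gaussianPDFReal_eq_one 0 hv
      rw [gaussianPDFReal_zero_eq hv, integral_const_mul] at h
      rw [← hI0, show (fun x : ℝ => x ^ 0 * rexp (-c * x ^ 2))
        = fun x : ℝ => rexp (-c * x ^ 2) by funext x; ring]
      exact h
    have r0 := J_rec hc 0
    simp only [Nat.reduceAdd] at r0
    push_cast at r0
    rw [hI0, hI2] at r0
    have h1 : I1 = 0 := by rw [← hI1]; exact J_one hc
    have r1 := J_rec hc 1
    simp only [Nat.reduceAdd] at r1
    push_cast at r1
    rw [hI1, hI3] at r1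
    have r2 := J_rec hc 2
    simp only [Nat.reduceAdd] at r2
    push_cast at r2
    rw [hI2, hI4] at r2
    have h2 : K * I2 = v := by linear_combination (-(K*I2))*hcv + (-((v:ℝ))*K)*r0 + (v:ℝ)*h0
    have h3 : I3 = 0 := by
      have hcn : (2:ℝ) * c ≠ 0 := by positivity
      rw [h1] at r1
      have h30 : (2*c) * I3 = 0 := by linarith
      exact (mul_eq_zero.1 h30).resolve_left hcn
    have h4 : K * I4 = 3 * (v:ℝ)^2 := by
      linear_combination (-(K*I4))*hcv + (-((v:ℝ))*K)*r2 + (3*(v:ℝ))*h2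
    interval_cases k
    · rw [htrans 0, hI0]; simpa [gm] using h0
    · rw [htrans 1, hI1, h1]; simp [gm]
    · rw [htrans 2, hI2]; simpa [gm] using h2
    · rw [htrans 3, hI3, h3]; simp [gm]
    · rw [htrans 4, hI4]; simpa [gm] using h4
end gauss
section indep
variable {Ω : Type*} [MeasurableSpace Ω] {μ : Measure Ω} {m : ℕ} {X : Fin m → Ω → ℝ}

lemma integrable_prod_pow (hind : iIndepFun X μ)
    (hmeas : ∀ i, Measurable (X i)) (k : Fin m → ℕ)
    (hint : ∀ i, Integrable (fun ω => X i ω ^ k i) μ) (s : Finset (Fin m)) :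
    Integrable (fun ω => ∏ i ∈ s, X i ω ^ k i) μ := by
  classical
  have hPM : IsProbabilityMeasure μ := hind.isProbabilityMeasure
  have hY : iIndepFun (fun i => fun ω => X i ω ^ k i) μ :=
    hind.comp (fun i => fun x : ℝ => x ^ k i) (fun i => measurable_id.pow_const (k i))
  induction s using Finset.induction_on with
  | empty => simpa using integrable_const (1:ℝ)
  | insert _ _ hi ih =>
    rename_i i s
    have hip : IndepFun (fun ω => ∏ j ∈ s, X j ω ^ k j) (fun ω => X i ω ^ k i) μ := by
      have h := hY.indepFun_finsetProd_of_notMem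
        (fun j => (hmeas j).pow_const (k j)) hi
      have : (∏ j ∈ s, fun ω => X j ω ^ k j) = fun ω => ∏ j ∈ s, X j ω ^ k j := by
        funext ω; simp [Finset.prod_apply]
      rwa [this] at h
    have := hip.integrable_mul ih (hint i)
    apply this.congr
    filter_upwards with ω
    simp [Finset.prod_insert hi]; ring

lemma integral_prod_pow (hind : iIndepFun X μ)
    (hmeas : ∀ i, Measurable (X i)) (k : Fin m → ℕ) (s : Finset (Fin m)) :
    ∫ ω, ∏ i ∈ s, X i ω ^ k i ∂μ = ∏ i ∈ s, ∫ ω, X i ω ^ k i ∂μ := by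
  classical
  have hPM : IsProbabilityMeasure μ := hind.isProbabilityMeasure
  have hY : iIndepFun (fun i => fun ω => X i ω ^ k i) μ :=
    hind.comp (fun i => fun x : ℝ => x ^ k i) (fun i => measurable_id.pow_const (k i))
  induction s using Finset.induction_on with
  | empty => simp
  | insert _ _ hi ih =>
    rename_i i s
    have hip : IndepFun (fun ω => ∏ j ∈ s, X j ω ^ k j) (fun ω => X i ω ^ k i) μ := by
      have h := hY.indepFun_finsetProd_of_notMem
        (fun j => (hmeas j).pow_const (k j)) hi
      have : (∏ j ∈ s, fun ω => X j ω ^ k j) = fun ω => ∏ j ∈ s, X j ω ^ k j := by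
        funext ω; simp [Finset.prod_apply]
      rwa [this] at h
    have hmul := hip.symm.integral_mul_eq_mul_integral
      (((hmeas i).pow_const (k i)).aestronglyMeasurable)
      ((Finset.measurable_prod s (fun j _ => (hmeas j).pow_const (k j))).aestronglyMeasurable)
    rw [Finset.prod_insert hi, ← ih]
    have : (fun ω => ∏ j ∈ insert i s, X j ω ^ k j)
        = (fun ω => X i ω ^ k i) * (fun ω => ∏ j ∈ s, X j ω ^ k j) := by
      funext ω; simp [Finset.prod_insert hi]
    rw [this]
    exact hmul

def cnt4 {m : ℕ} (i j k l r : Fin m) : ℕ :=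
  (if r = i then 1 else 0) + (if r = j then 1 else 0)
    + (if r = k then 1 else 0) + (if r = l then 1 else 0)

lemma cnt4_le {m : ℕ} (i j k l r : Fin m) : cnt4 i j k l r ≤ 4 := by
  unfold cnt4; split_ifs <;> norm_num

lemma mul4_eq_prod_pow {m : ℕ} (x : Fin m → ℝ) (i j k l : Fin m) :
    x i * x j * x k * x l = ∏ r, x r ^ cnt4 i j k l r := by
  have key : ∀ a : Fin m, ∏ r, x r ^ (if r = a then 1 else 0) = x a := by
    intro a
    rw [show (fun r => x r ^ (if r = a then 1 else 0))
      = fun r => if r = a then x r else 1 from funext fun r => by split <;> simp]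
    simp [Finset.prod_ite_eq']
  calc x i * x j * x k * x l
      = (∏ r, x r ^ (if r = i then 1 else 0)) * (∏ r, x r ^ (if r = j then 1 else 0))
        * (∏ r, x r ^ (if r = k then 1 else 0)) * (∏ r, x r ^ (if r = l then 1 else 0)) := by
        rw [key, key, key, key]
    _ = ∏ r, x r ^ cnt4 i j k l r := by
        rw [← Finset.prod_mul_distrib, ← Finset.prod_mul_distrib, ← Finset.prod_mul_distrib]
        refine Finset.prod_congr rfl fun r _ => ?_
        simp only [cnt4, pow_add]

lemma fourth_moment {Ω : Type*} [MeasurableSpace Ω] {μ : Measure Ω} {m : ℕ} {X : Fin m → Ω → ℝ}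
    (hind : iIndepFun X μ)
    (hmeas : ∀ i, Measurable (X i)) (v : Fin m → ℝ≥0)
    (hlaw : ∀ i, μ.map (X i) = gaussianReal 0 (v i)) (i j k l : Fin m) :
    ∫ ω, X i ω * X j ω * X k ω * X l ω ∂μ =
        (if i = j then (v i : ℝ) else 0) * (if k = l then (v k : ℝ) else 0)
      + (if i = k then (v i : ℝ) else 0) * (if j = l then (v j : ℝ) else 0)
      + (if i = l then (v i : ℝ) else 0) * (if j = k then (v j : ℝ) else 0) := by
  classical
  have hmom : ∀ (r : Fin m) (e : ℕ), e ≤ 4 → ∫ ω, X r ω ^ e ∂μ = gm (v r) e := by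
    intro r e he
    have h := integral_map (μ := μ) (φ := X r) (f := fun x : ℝ => x ^ e)
      (hmeas r).aemeasurable ((measurable_id.pow_const e).aestronglyMeasurable)
    rw [hlaw r] at h
    rw [← h, integral_pow_gaussianReal _ he]
  have hpt : (fun ω => X i ω * X j ω * X k ω * X l ω)
      = fun ω => ∏ r, X r ω ^ cnt4 i j k l r :=
    funext fun ω => mul4_eq_prod_pow (fun r => X r ω) i j k l
  rw [hpt, integral_prod_pow hind hmeas _ Finset.univ,
    Finset.prod_congr rfl (fun r _ => hmom r _ (cnt4_le i j k l r))]
  -- now pure combinatorics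
  by_cases hij : i = j
  · subst hij
    by_cases hkl : k = l
    · subst hkl
      by_cases hik : i = k
      · subst hik
        have hc : ∀ r, gm (v r : ℝ) (cnt4 i i i i r)
            = if r = i then 3 * ((v r : ℝ))^2 else 1 := by
          intro r; by_cases h : r = i <;> simp [cnt4, h, gm]
        rw [Finset.prod_congr rfl (fun r _ => hc r), Finset.prod_ite_eq']
        simp only [Finset.mem_univ, if_pos, if_true]
        ring
      · have hc : ∀ r, gm (v r : ℝ) (cnt4 i i k k r)
            = (if r = i then (v r : ℝ) else 1) * (if r = k then (v r : ℝ) else 1) := by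
          intro r
          by_cases h1 : r = i <;> by_cases h2 : r = k <;>
            simp_all [cnt4, gm]
        rw [Finset.prod_congr rfl (fun r _ => hc r), Finset.prod_mul_distrib,
          Finset.prod_ite_eq', Finset.prod_ite_eq']
        simp [hik, (Ne.symm hik : k ≠ i), fun h : k = i => hik h.symm]
    · -- i = j, k ≠ l : zero case
      by_cases hki : k = i
      · subst hki
        have hli : l ≠ k := fun h => hkl h.symm
        rw [Finset.prod_eq_zero (Finset.mem_univ l) (by simp [cnt4, hli, gm])]
        simp [hkl, hli, fun h : k = l => hkl h]
      · rw [Finset.prod_eq_zero (Finset.mem_univ k)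
          (by simp [cnt4, hki, hkl, gm])]
        by_cases hil : i = l <;> simp_all [eq_comm]
  · by_cases hik : i = k
    · subst hik
      by_cases hjl : j = l
      · subst hjl
        have hc : ∀ r, gm (v r : ℝ) (cnt4 i j i j r)
            = (if r = i then (v r : ℝ) else 1) * (if r = j then (v r : ℝ) else 1) := by
          intro r
          by_cases h1 : r = i <;> by_cases h2 : r = j <;>
            simp_all [cnt4, gm]
        rw [Finset.prod_congr rfl (fun r _ => hc r), Finset.prod_mul_distrib,
          Finset.prod_ite_eq', Finset.prod_ite_eq']
        simp [hij, fun h : j = i => hij h.symm]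
      · have hji : ¬ j = i := fun h => hij h.symm
        rw [Finset.prod_eq_zero (Finset.mem_univ j)
          (by simp [cnt4, hji, hjl, gm])]
        simp_all [eq_comm]
    · by_cases hil : i = l
      · subst hil
        by_cases hjk : j = k
        · subst hjk
          have hc : ∀ r, gm (v r : ℝ) (cnt4 i j j i r)
              = (if r = i then (v r : ℝ) else 1) * (if r = j then (v r : ℝ) else 1) := by
            intro r
            by_cases h1 : r = i <;> by_cases h2 : r = j <;>
              simp_all [cnt4, gm]
          rw [Finset.prod_congr rfl (fun r _ => hc r), Finset.prod_mul_distrib,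
            Finset.prod_ite_eq', Finset.prod_ite_eq']
          simp [hij, hik, fun h : j = i => hij h.symm]
        · have hji : ¬ j = i := fun h => hij h.symm
          rw [Finset.prod_eq_zero (Finset.mem_univ j)
            (by simp [cnt4, hji, hjk, gm])]
          simp_all [eq_comm]
      · rw [Finset.prod_eq_zero (Finset.mem_univ i)
          (by simp [cnt4, hij, hik, hil, gm])]
        simp_all [eq_comm]
end indep
lemma collapse1 {m : ℕ} (c d e f V : Fin m → ℝ) :
    (∑ i, ∑ j, ∑ k, ∑ l, (c i * d j * e k * f l)
      * ((if i = j then V i else 0) * (if k = l then V k else 0)))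
    = (∑ i, c i * d i * V i) * (∑ i, e i * f i * V i) := by
  classical
  have inner : ∀ i j : Fin m, (∑ k, ∑ l : Fin m, (c i * d j * e k * f l)
      * ((if i = j then V i else 0) * (if k = l then V k else 0)))
      = (c i * d j * (if i = j then V i else 0)) * ∑ k, e k * f k * V k := by
    intro i j
    rw [Finset.mul_sum]
    refine Finset.sum_congr rfl fun k _ => ?_
    rw [show (fun l => (c i * d j * e k * f l)
        * ((if i = j then V i else 0) * (if k = l then V k else 0)))
      = fun l => if k = l then (c i * d j * (if i = j then V i else 0)) * (e k * f k * V k) else 0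
      from funext fun l => by split_ifs <;> subst_vars <;> ring]
    rw [Finset.sum_ite_eq]
    simp
  calc (∑ i, ∑ j, ∑ k, ∑ l : Fin m, (c i * d j * e k * f l)
      * ((if i = j then V i else 0) * (if k = l then V k else 0)))
      = ∑ i, ∑ j, (c i * d j * (if i = j then V i else 0)) * ∑ k, e k * f k * V k := by
        exact Finset.sum_congr rfl fun i _ => Finset.sum_congr rfl fun j _ => inner i j
    _ = (∑ i, ∑ j, c i * d j * (if i = j then V i else 0)) * ∑ k, e k * f k * V k := by
        rw [Finset.sum_mul]
        exact Finset.sum_congr rfl fun i _ => by rw [Finset.sum_mul]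
    _ = (∑ i, c i * d i * V i) * (∑ i, e i * f i * V i) := by
        congr 1
        refine Finset.sum_congr rfl fun i _ => ?_
        rw [show (fun j => c i * d j * (if i = j then V i else 0))
          = fun j => if i = j then c i * d i * V i else 0
          from funext fun j => by split_ifs with h <;> simp_all <;> ring]
        rw [Finset.sum_ite_eq]
        simp

lemma collapse2 {m : ℕ} (c d e f V : Fin m → ℝ) :
    (∑ i, ∑ j, ∑ k, ∑ l, (c i * d j * e k * f l)
      * ((if i = k then V i else 0) * (if j = l then V j else 0)))
    = (∑ i, c i * e i * V i) * (∑ i, d i * f i * V i) := by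
  classical
  have inner : ∀ i j : Fin m, (∑ k, ∑ l : Fin m, (c i * d j * e k * f l)
      * ((if i = k then V i else 0) * (if j = l then V j else 0)))
      = (c i * e i * V i) * (d j * f j * V j) := by
    intro i j
    have hk : ∀ k : Fin m, (∑ l : Fin m, (c i * d j * e k * f l)
        * ((if i = k then V i else 0) * (if j = l then V j else 0)))
        = if i = k then (c i * e k * V i) * (d j * f j * V j) else 0 := by
      intro k
      rw [show (fun l => (c i * d j * e k * f l)
          * ((if i = k then V i else 0) * (if j = l then V j else 0)))
        = fun l => if j = l then
            (if i = k then (c i * e k * V i) * (d j * f j * V j) else 0) else 0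
        from funext fun l => by split_ifs <;> subst_vars <;> ring]
      rw [Finset.sum_ite_eq]
      simp
    rw [Finset.sum_congr rfl fun k _ => hk k, Finset.sum_ite_eq]
    simp
  calc (∑ i, ∑ j, ∑ k, ∑ l : Fin m, (c i * d j * e k * f l)
      * ((if i = k then V i else 0) * (if j = l then V j else 0)))
      = ∑ i, ∑ j, (c i * e i * V i) * (d j * f j * V j) :=
        Finset.sum_congr rfl fun i _ => Finset.sum_congr rfl fun j _ => inner i j
    _ = (∑ i, c i * e i * V i) * (∑ i, d i * f i * V i) := by
        rw [Finset.sum_mul]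
        exact Finset.sum_congr rfl fun i _ => by rw [Finset.mul_sum]

lemma collapse3 {m : ℕ} (c d e f V : Fin m → ℝ) :
    (∑ i, ∑ j, ∑ k, ∑ l, (c i * d j * e k * f l)
      * ((if i = l then V i else 0) * (if j = k then V j else 0)))
    = (∑ i, c i * f i * V i) * (∑ i, d i * e i * V i) := by
  classical
  have inner : ∀ i j : Fin m, (∑ k, ∑ l : Fin m, (c i * d j * e k * f l)
      * ((if i = l then V i else 0) * (if j = k then V j else 0)))
      = (c i * f i * V i) * (d j * e j * V j) := by
    intro i j
    have hk : ∀ k : Fin m, (∑ l : Fin m, (c i * d j * e k * f l)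
        * ((if i = l then V i else 0) * (if j = k then V j else 0)))
        = if j = k then (c i * f i * V i) * (d j * e k * V j) else 0 := by
      intro k
      rw [show (fun l => (c i * d j * e k * f l)
          * ((if i = l then V i else 0) * (if j = k then V j else 0)))
        = fun l => if i = l then
            (if j = k then (c i * f l * V i) * (d j * e k * V j) else 0) else 0
        from funext fun l => by split_ifs <;> subst_vars <;> ring]
      rw [Finset.sum_ite_eq]
      simp
    rw [Finset.sum_congr rfl fun k _ => hk k, Finset.sum_ite_eq]
    simp
  calc (∑ i, ∑ j, ∑ k, ∑ l : Fin m, (c i * d j * e k * f l)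
      * ((if i = l then V i else 0) * (if j = k then V j else 0)))
      = ∑ i, ∑ j, (c i * f i * V i) * (d j * e j * V j) :=
        Finset.sum_congr rfl fun i _ => Finset.sum_congr rfl fun j _ => inner i j
    _ = (∑ i, c i * f i * V i) * (∑ i, d i * e i * V i) := by
        rw [Finset.sum_mul]
        exact Finset.sum_congr rfl fun i _ => by rw [Finset.mul_sum]
lemma isserlis {Ω : Type*} [MeasurableSpace Ω] {μ : Measure Ω} {m : ℕ} {X : Fin m → Ω → ℝ}
    (hind : iIndepFun X μ)
    (hmeas : ∀ i, Measurable (X i)) (v : Fin m → ℝ≥0)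
    (hlaw : ∀ i, μ.map (X i) = gaussianReal 0 (v i)) (c1 c2 c3 c4 : Fin m → ℝ) :
    Integrable (fun ω => (∑ i, c1 i * X i ω) * (∑ i, c2 i * X i ω)
      * (∑ i, c3 i * X i ω) * (∑ i, c4 i * X i ω)) μ ∧
    ∫ ω, (∑ i, c1 i * X i ω) * (∑ i, c2 i * X i ω)
        * (∑ i, c3 i * X i ω) * (∑ i, c4 i * X i ω) ∂μ
      = (∑ i, c1 i * c2 i * (v i : ℝ)) * (∑ i, c3 i * c4 i * (v i : ℝ))
      + (∑ i, c1 i * c3 i * (v i : ℝ)) * (∑ i, c2 i * c4 i * (v i : ℝ))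
      + (∑ i, c1 i * c4 i * (v i : ℝ)) * (∑ i, c2 i * c3 i * (v i : ℝ)) := by
  classical
  have hint_mono : ∀ i j k l : Fin m,
      Integrable (fun ω => X i ω * X j ω * X k ω * X l ω) μ := by
    intro i j k l
    have hpt : (fun ω => X i ω * X j ω * X k ω * X l ω)
        = fun ω => ∏ r, X r ω ^ cnt4 i j k l r :=
      funext fun ω => mul4_eq_prod_pow (fun r => X r ω) i j k l
    rw [hpt]
    refine integrable_prod_pow hind hmeas _ (fun r => ?_) _
    have h := integrable_pow_gaussianReal (v r) (cnt4 i j k l r)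
    have h2 := (integrable_map_measure (μ := μ) (f := X r)
      (g := fun x : ℝ => x ^ (cnt4 i j k l r))
      ((measurable_id.pow_const _).aestronglyMeasurable) (hmeas r).aemeasurable)
    rw [hlaw r] at h2
    have h3 := h2.mp h
    exact h3
  have hpt : (fun ω => (∑ i, c1 i * X i ω) * (∑ i, c2 i * X i ω)
      * (∑ i, c3 i * X i ω) * (∑ i, c4 i * X i ω))
      = fun ω => ∑ q : Fin m × Fin m × Fin m × Fin m,
          (c4 q.1 * c3 q.2.1 * c2 q.2.2.1 * c1 q.2.2.2)
            * (X q.1 ω * X q.2.1 ω * X q.2.2.1 ω * X q.2.2.2 ω) := by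
    funext ω
    simp only [Fintype.sum_prod_type]
    simp only [Finset.sum_mul, Finset.mul_sum]
    refine Finset.sum_congr rfl fun i _ => Finset.sum_congr rfl fun j _ =>
      Finset.sum_congr rfl fun k _ => Finset.sum_congr rfl fun l _ => by ring
  constructor
  · rw [hpt]
    exact integrable_finset_sum _ (fun q _ => (hint_mono _ _ _ _).const_mul _)
  · rw [hpt, integral_finset_sum _ (fun q _ => (hint_mono _ _ _ _).const_mul _)]
    simp only [integral_const_mul]
    rw [Finset.sum_congr rfl (fun q _ => by
      rw [fourth_moment hind hmeas v hlaw q.1 q.2.1 q.2.2.1 q.2.2.2])]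
    simp only [Fintype.sum_prod_type]
    simp only [mul_add, Finset.sum_add_distrib]
    have hswap : ∀ a b : Fin m → ℝ,
        (∑ i, a i * b i * ((v i : ℝ))) = ∑ i, b i * a i * ((v i : ℝ)) :=
      fun a b => Finset.sum_congr rfl (fun i _ => by ring)
    rw [collapse1 c4 c3 c2 c1 (fun i => (v i : ℝ)), collapse2 c4 c3 c2 c1 (fun i => (v i : ℝ)),
      collapse3 c4 c3 c2 c1 (fun i => (v i : ℝ))]
    rw [hswap c4 c3, hswap c2 c1, hswap c4 c2, hswap c3 c1, hswap c4 c1, hswap c3 c2]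
    ring
def tfun5 (p q b n : ℕ) : ℕ → ℝ
  | 0 => 0
  | 1 => ((p * b : ℕ) : ℝ)
  | 2 => ((p * b + b : ℕ) : ℝ)
  | 3 => ((q * b : ℕ) : ℝ)
  | 4 => ((q * b + b : ℕ) : ℝ)
  | _ + 5 => ((n : ℕ) : ℝ)

lemma pair_moment {Ω : Type*} [MeasurableSpace Ω] (μ : Measure Ω) (B : ℝ → Ω → ℝ)
    (hB : IsStandardBM μ B) (a b p q n : ℕ) (hb : 1 ≤ b) (hpq : p < q) (hqa : q < a)
    (hn : n = a * b) :
    Integrable (fun ω =>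
      ((B ((p * b + b : ℕ) : ℝ) ω - B ((p * b : ℕ) : ℝ) ω) / (b : ℝ)
          - B ((n : ℕ) : ℝ) ω / (n : ℝ)) ^ 2 *
      ((B ((q * b + b : ℕ) : ℝ) ω - B ((q * b : ℕ) : ℝ) ω) / (b : ℝ)
          - B ((n : ℕ) : ℝ) ω / (n : ℝ)) ^ 2) μ ∧
    ∫ ω, ((B ((p * b + b : ℕ) : ℝ) ω - B ((p * b : ℕ) : ℝ) ω) / (b : ℝ)
            - B ((n : ℕ) : ℝ) ω / (n : ℝ)) ^ 2 *
          ((B ((q * b + b : ℕ) : ℝ) ω - B ((q * b : ℕ) : ℝ) ω) / (b : ℝ)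
            - B ((n : ℕ) : ℝ) ω / (n : ℝ)) ^ 2 ∂μ
      = 3 / (n : ℝ) ^ 2 + 1 / (b : ℝ) ^ 2 - 2 / ((b : ℝ) * n) := by
  obtain ⟨hPM, hBmeas, hB0, hBlaw, hBind⟩ := hB
  set t : ℕ → ℝ := tfun5 p q b n with ht
  have hmono : Monotone t := by
    apply monotone_nat_of_le_succ
    intro i
    match i with
    | 0 => first | (simp [ht, tfun5]; positivity) | simp [ht, tfun5]
    | 1 => simp only [ht, tfun5]; exact_mod_cast Nat.le_add_right _ _
    | 2 => simp only [ht, tfun5]; exact_mod_cast by nlinarith [hpq]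
    | 3 => simp only [ht, tfun5]; exact_mod_cast Nat.le_add_right _ _
    | 4 => simp only [ht, tfun5]; exact_mod_cast by nlinarith [hqa, hn.symm.le]
    | (i + 5) => first | (simp [ht, tfun5]; positivity) | simp [ht, tfun5]
  have hnonneg : ∀ i, 0 ≤ t i := by
    intro i
    match i with
    | 0 => first | (simp [ht, tfun5]; positivity) | simp [ht, tfun5]
    | 1 => first | (simp [ht, tfun5]; positivity) | simp [ht, tfun5]
    | 2 => first | (simp [ht, tfun5]; positivity) | simp [ht, tfun5]
    | 3 => first | (simp [ht, tfun5]; positivity) | simp [ht, tfun5]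
    | 4 => first | (simp [ht, tfun5]; positivity) | simp [ht, tfun5]
    | (i + 5) => first | (simp [ht, tfun5]; positivity) | simp [ht, tfun5]
  set X : Fin 5 → Ω → ℝ := fun i => fun ω => B (t (i + 1)) ω - B (t i) ω with hX
  have hind : iIndepFun X μ := hBind 5 t hmono hnonneg
  have hmeas : ∀ i : Fin 5, Measurable (X i) := fun i => (hBmeas _).sub (hBmeas _)
  set v : Fin 5 → ℝ≥0 := fun i => Real.toNNReal (t (i + 1) - t i) with hv
  have hlaw : ∀ i : Fin 5, μ.map (X i) = gaussianReal 0 (v i) := fun i =>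
    hBlaw (t i) (t (i + 1)) (hnonneg i) (hmono (Nat.le_succ _))
  have hV : ∀ i : Fin 5, ((v i : ℝ)) = t (i + 1) - t i := fun i =>
    Real.coe_toNNReal _ (sub_nonneg.2 (hmono (Nat.le_succ _)))
  have hb0 : (b : ℝ) ≠ 0 := Nat.cast_ne_zero.mpr (by omega)
  have hn0 : (n : ℝ) ≠ 0 := Nat.cast_ne_zero.mpr (by subst hn; have : 0 < a*b := Nat.mul_pos (by omega) (by omega); omega)
  set α : ℝ := 1 / (b : ℝ) - 1 / (n : ℝ) with hα
  set β : ℝ := -(1 / (n : ℝ)) with hβ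
  set c1 : Fin 5 → ℝ := fun i => if i = 1 then α else β with hc1
  set c2 : Fin 5 → ℝ := fun i => if i = 3 then α else β with hc2
  have hZ1 : ∀ ω, (B ((p * b + b : ℕ) : ℝ) ω - B ((p * b : ℕ) : ℝ) ω) / (b : ℝ)
      - B ((n : ℕ) : ℝ) ω / (n : ℝ) = ∑ i, c1 i * X i ω := by
    intro ω
    have h5 : t 5 = ((n : ℕ) : ℝ) := rfl
    have h0 : B (t 0) ω = 0 := hB0 ω
    rw [Fin.sum_univ_five]
    simp only [hc1, hX]
    norm_num
    show _ = β * (B (t 1) ω - B (t 0) ω) + α * (B (t 2) ω - B (t 1) ω)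
      + β * (B (t 3) ω - B (t 2) ω) + β * (B (t 4) ω - B (t 3) ω)
      + β * (B (t 5) ω - B (t 4) ω)
    rw [h0, h5]
    have h1 : t 1 = ((p * b : ℕ) : ℝ) := rfl
    have h2 : t 2 = ((p * b + b : ℕ) : ℝ) := rfl
    rw [h1, h2, hα, hβ]
    field_simp
    push_cast
    ring
  have hZ2 : ∀ ω, (B ((q * b + b : ℕ) : ℝ) ω - B ((q * b : ℕ) : ℝ) ω) / (b : ℝ)
      - B ((n : ℕ) : ℝ) ω / (n : ℝ) = ∑ i, c2 i * X i ω := by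
    intro ω
    have h5 : t 5 = ((n : ℕ) : ℝ) := rfl
    have h0 : B (t 0) ω = 0 := hB0 ω
    rw [Fin.sum_univ_five]
    simp only [hc2, hX]
    norm_num
    show _ = β * (B (t 1) ω - B (t 0) ω) + β * (B (t 2) ω - B (t 1) ω)
      + β * (B (t 3) ω - B (t 2) ω) + α * (B (t 4) ω - B (t 3) ω)
      + β * (B (t 5) ω - B (t 4) ω)
    rw [h0, h5]
    have h3 : t 3 = ((q * b : ℕ) : ℝ) := rfl
    have h4 : t 4 = ((q * b + b : ℕ) : ℝ) := rfl
    rw [h3, h4, hα, hβ]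
    field_simp
    push_cast
    ring
  obtain ⟨hint, hval⟩ := isserlis hind hmeas v hlaw c1 c1 c2 c2
  have heq : ∀ ω, ((B ((p * b + b : ℕ) : ℝ) ω - B ((p * b : ℕ) : ℝ) ω) / (b : ℝ)
            - B ((n : ℕ) : ℝ) ω / (n : ℝ)) ^ 2 *
          ((B ((q * b + b : ℕ) : ℝ) ω - B ((q * b : ℕ) : ℝ) ω) / (b : ℝ)
            - B ((n : ℕ) : ℝ) ω / (n : ℝ)) ^ 2
      = (∑ i, c1 i * X i ω) * (∑ i, c1 i * X i ω)
        * (∑ i, c2 i * X i ω) * (∑ i, c2 i * X i ω) := by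
    intro ω
    rw [← hZ1 ω, ← hZ2 ω]
    ring
  have hV0 : ((v 0 : ℝ)) = ((p * b : ℕ) : ℝ) - 0 := hV 0
  have hV1 : ((v 1 : ℝ)) = ((p * b + b : ℕ) : ℝ) - ((p * b : ℕ) : ℝ) := hV 1
  have hV2 : ((v 2 : ℝ)) = ((q * b : ℕ) : ℝ) - ((p * b + b : ℕ) : ℝ) := hV 2
  have hV3 : ((v 3 : ℝ)) = ((q * b + b : ℕ) : ℝ) - ((q * b : ℕ) : ℝ) := hV 3
  have hV4 : ((v 4 : ℝ)) = ((n : ℕ) : ℝ) - ((q * b + b : ℕ) : ℝ) := hV 4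
  constructor
  · apply hint.congr
    filter_upwards with ω
    rw [heq ω]
  · rw [integral_congr_ae (ae_of_all _ heq), hval]
    have e10 : c1 0 = β := if_neg (by decide)
    have e11 : c1 1 = α := if_pos rfl
    have e12 : c1 2 = β := if_neg (by decide)
    have e13 : c1 3 = β := if_neg (by decide)
    have e14 : c1 4 = β := if_neg (by decide)
    have e20 : c2 0 = β := if_neg (by decide)
    have e21 : c2 1 = β := if_neg (by decide)
    have e22 : c2 2 = β := if_neg (by decide)
    have e23 : c2 3 = α := if_pos rfl
    have e24 : c2 4 = β := if_neg (by decide)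
    simp only [Fin.sum_univ_five, e10, e11, e12, e13, e14, e20, e21, e22, e23, e24,
      hV0, hV1, hV2, hV3, hV4]
    push_cast
    rw [hα, hβ]
    field_simp
    ring
def tfun3 (l b n : ℕ) : ℕ → ℝ
  | 0 => 0
  | 1 => ((l * b : ℕ) : ℝ)
  | 2 => ((l * b + b : ℕ) : ℝ)
  | _ + 3 => ((n : ℕ) : ℝ)

lemma single_moment {Ω : Type*} [MeasurableSpace Ω] (μ : Measure Ω) (B : ℝ → Ω → ℝ)
    (hB : IsStandardBM μ B) (a b l n : ℕ) (hb : 1 ≤ b) (hla : l < a)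
    (hn : n = a * b) :
    Integrable (fun ω =>
      ((B ((l * b + b : ℕ) : ℝ) ω - B ((l * b : ℕ) : ℝ) ω) / (b : ℝ)
          - B ((n : ℕ) : ℝ) ω / (n : ℝ)) ^ 2 *
      ((B ((l * b + b : ℕ) : ℝ) ω - B ((l * b : ℕ) : ℝ) ω) / (b : ℝ)
          - B ((n : ℕ) : ℝ) ω / (n : ℝ)) ^ 2) μ ∧
    ∫ ω, ((B ((l * b + b : ℕ) : ℝ) ω - B ((l * b : ℕ) : ℝ) ω) / (b : ℝ)
            - B ((n : ℕ) : ℝ) ω / (n : ℝ)) ^ 2 *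
          ((B ((l * b + b : ℕ) : ℝ) ω - B ((l * b : ℕ) : ℝ) ω) / (b : ℝ)
            - B ((n : ℕ) : ℝ) ω / (n : ℝ)) ^ 2 ∂μ
      = 3 * (((n : ℝ) - b) / ((b : ℝ) * n)) ^ 2 := by
  obtain ⟨hPM, hBmeas, hB0, hBlaw, hBind⟩ := hB
  set t : ℕ → ℝ := tfun3 l b n with ht
  have hmono : Monotone t := by
    apply monotone_nat_of_le_succ
    intro i
    match i with
    | 0 => first | (simp [ht, tfun3]; positivity) | simp [ht, tfun3]
    | 1 => simp only [ht, tfun3]; exact_mod_cast Nat.le_add_right _ _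
    | 2 => simp only [ht, tfun3]; exact_mod_cast by nlinarith [hla, hn.symm.le]
    | (i + 3) => first | (simp [ht, tfun3]; positivity) | simp [ht, tfun3]
  have hnonneg : ∀ i, 0 ≤ t i := by
    intro i
    match i with
    | 0 => first | (simp [ht, tfun3]; positivity) | simp [ht, tfun3]
    | 1 => first | (simp [ht, tfun3]; positivity) | simp [ht, tfun3]
    | 2 => first | (simp [ht, tfun3]; positivity) | simp [ht, tfun3]
    | (i + 3) => first | (simp [ht, tfun3]; positivity) | simp [ht, tfun3]
  set X : Fin 3 → Ω → ℝ := fun i => fun ω => B (t (i + 1)) ω - B (t i) ω with hX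
  have hind : iIndepFun X μ := hBind 3 t hmono hnonneg
  have hmeas : ∀ i : Fin 3, Measurable (X i) := fun i => (hBmeas _).sub (hBmeas _)
  set v : Fin 3 → ℝ≥0 := fun i => Real.toNNReal (t (i + 1) - t i) with hv
  have hlaw : ∀ i : Fin 3, μ.map (X i) = gaussianReal 0 (v i) := fun i =>
    hBlaw (t i) (t (i + 1)) (hnonneg i) (hmono (Nat.le_succ _))
  have hV : ∀ i : Fin 3, ((v i : ℝ)) = t (i + 1) - t i := fun i =>
    Real.coe_toNNReal _ (sub_nonneg.2 (hmono (Nat.le_succ _)))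
  have hb0 : (b : ℝ) ≠ 0 := Nat.cast_ne_zero.mpr (by omega)
  have hn0 : (n : ℝ) ≠ 0 := Nat.cast_ne_zero.mpr
    (by subst hn; have : 0 < a*b := Nat.mul_pos (by omega) (by omega); omega)
  set α : ℝ := 1 / (b : ℝ) - 1 / (n : ℝ) with hα
  set β : ℝ := -(1 / (n : ℝ)) with hβ
  set c1 : Fin 3 → ℝ := fun i => if i = 1 then α else β with hc1
  have hZ1 : ∀ ω, (B ((l * b + b : ℕ) : ℝ) ω - B ((l * b : ℕ) : ℝ) ω) / (b : ℝ)
      - B ((n : ℕ) : ℝ) ω / (n : ℝ) = ∑ i, c1 i * X i ω := by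
    intro ω
    have h3 : t 3 = ((n : ℕ) : ℝ) := rfl
    have h0 : B (t 0) ω = 0 := hB0 ω
    rw [Fin.sum_univ_three]
    simp only [hc1, hX]
    norm_num
    show _ = β * (B (t 1) ω - B (t 0) ω) + α * (B (t 2) ω - B (t 1) ω)
      + β * (B (t 3) ω - B (t 2) ω)
    rw [h0, h3]
    have h1 : t 1 = ((l * b : ℕ) : ℝ) := rfl
    have h2 : t 2 = ((l * b + b : ℕ) : ℝ) := rfl
    rw [h1, h2, hα, hβ]
    field_simp
    push_cast
    ring
  obtain ⟨hint, hval⟩ := isserlis hind hmeas v hlaw c1 c1 c1 c1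
  have heq : ∀ ω, ((B ((l * b + b : ℕ) : ℝ) ω - B ((l * b : ℕ) : ℝ) ω) / (b : ℝ)
            - B ((n : ℕ) : ℝ) ω / (n : ℝ)) ^ 2 *
          ((B ((l * b + b : ℕ) : ℝ) ω - B ((l * b : ℕ) : ℝ) ω) / (b : ℝ)
            - B ((n : ℕ) : ℝ) ω / (n : ℝ)) ^ 2
      = (∑ i, c1 i * X i ω) * (∑ i, c1 i * X i ω)
        * (∑ i, c1 i * X i ω) * (∑ i, c1 i * X i ω) := by
    intro ω
    rw [← hZ1 ω]
    ring
  have hV0 : ((v 0 : ℝ)) = ((l * b : ℕ) : ℝ) - 0 := hV 0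
  have hV1 : ((v 1 : ℝ)) = ((l * b + b : ℕ) : ℝ) - ((l * b : ℕ) : ℝ) := hV 1
  have hV2 : ((v 2 : ℝ)) = ((n : ℕ) : ℝ) - ((l * b + b : ℕ) : ℝ) := hV 2
  constructor
  · apply hint.congr
    filter_upwards with ω
    rw [heq ω]
  · rw [integral_congr_ae (ae_of_all _ heq), hval]
    have e10 : c1 0 = β := if_neg (by decide)
    have e11 : c1 1 = α := if_pos rfl
    have e12 : c1 2 = β := if_neg (by decide)
    simp only [Fin.sum_univ_three, e10, e11, e12, hV0, hV1, hV2]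
    push_cast
    rw [hα, hβ]
    field_simp
    ring
theorem sum_batch_mean_squares_second_moment
    {Ω : Type*} [MeasurableSpace Ω] (μ : Measure Ω) (B : ℝ → Ω → ℝ)
    (hB : IsStandardBM μ B) (a b : ℕ) (ha : 2 ≤ a) (hb : 1 ≤ b) (n : ℕ) (hn : n = a * b) :
    (∀ p q : ℕ, p < a → q < a → p ≠ q →
      ∫ ω, ((B ((p * b + b : ℕ) : ℝ) ω - B ((p * b : ℕ) : ℝ) ω) / (b : ℝ)
              - B (n : ℝ) ω / (n : ℝ)) ^ 2 *
            ((B ((q * b + b : ℕ) : ℝ) ω - B ((q * b : ℕ) : ℝ) ω) / (b : ℝ)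
              - B (n : ℝ) ω / (n : ℝ)) ^ 2 ∂μ
        = 3 / (n : ℝ) ^ 2 + 1 / (b : ℝ) ^ 2 - 2 / ((b : ℝ) * n)) ∧
    ∫ ω, (∑ l ∈ Finset.range a,
        ((B ((l * b + b : ℕ) : ℝ) ω - B ((l * b : ℕ) : ℝ) ω) / (b : ℝ)
          - B (n : ℝ) ω / (n : ℝ)) ^ 2) ^ 2 ∂μ
      = 3 * a * (((n : ℝ) - b) / ((b : ℝ) * n)) ^ 2
        + (a : ℝ) * ((a : ℝ) - 1) * (3 / (n : ℝ) ^ 2 + 1 / (b : ℝ) ^ 2 - 2 / ((b : ℝ) * n)) := by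
  classical
  set Z : ℕ → Ω → ℝ := fun l ω =>
    (B ((l * b + b : ℕ) : ℝ) ω - B ((l * b : ℕ) : ℝ) ω) / (b : ℝ)
      - B ((n : ℕ) : ℝ) ω / (n : ℝ) with hZ
  set C : ℝ := 3 / (n : ℝ) ^ 2 + 1 / (b : ℝ) ^ 2 - 2 / ((b : ℝ) * n) with hC
  set D : ℝ := 3 * (((n : ℝ) - b) / ((b : ℝ) * n)) ^ 2 with hD
  have part1 : ∀ p q : ℕ, p < a → q < a → p ≠ q →
      ∫ ω, Z p ω ^ 2 * Z q ω ^ 2 ∂μ = C := by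
    intro p q hp hq hne
    rcases lt_or_gt_of_ne hne with h | h
    · exact (pair_moment μ B hB a b p q n hb h hq hn).2
    · have h2 := (pair_moment μ B hB a b q p n hb h hp hn).2
      rw [integral_congr_ae (ae_of_all _ (fun ω => mul_comm (Z p ω ^ 2) (Z q ω ^ 2)))]
      exact h2
  have partint : ∀ p q : ℕ, p < a → q < a →
      Integrable (fun ω => Z p ω ^ 2 * Z q ω ^ 2) μ := by
    intro p q hp hq
    by_cases hne : p = q
    · subst hne
      exact (single_moment μ B hB a b p n hb hp hn).1
    · rcases lt_or_gt_of_ne hne with h | h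
      · exact (pair_moment μ B hB a b p q n hb h hq hn).1
      · have h2 := (pair_moment μ B hB a b q p n hb h hp hn).1
        apply h2.congr
        filter_upwards with ω
        exact mul_comm _ _
  have partdiag : ∀ l : ℕ, l < a → ∫ ω, Z l ω ^ 2 * Z l ω ^ 2 ∂μ = D := by
    intro l hl
    exact (single_moment μ B hB a b l n hb hl hn).2
  refine ⟨part1, ?_⟩
  have hsq : ∀ ω : Ω, (∑ l ∈ Finset.range a, Z l ω ^ 2) ^ 2
      = ∑ l ∈ Finset.range a, ∑ k ∈ Finset.range a, Z l ω ^ 2 * Z k ω ^ 2 := by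
    intro ω
    rw [sq, Finset.sum_mul_sum]
  rw [integral_congr_ae (ae_of_all _ hsq)]
  rw [integral_finset_sum _ (fun l hl => integrable_finset_sum _
    (fun k hk => partint l k (Finset.mem_range.mp hl) (Finset.mem_range.mp hk)))]
  calc (∑ l ∈ Finset.range a, ∫ ω, ∑ k ∈ Finset.range a, Z l ω ^ 2 * Z k ω ^ 2 ∂μ)
      = ∑ l ∈ Finset.range a, ∑ k ∈ Finset.range a, ∫ ω, Z l ω ^ 2 * Z k ω ^ 2 ∂μ :=
        Finset.sum_congr rfl fun l hl => integral_finset_sum _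
          (fun k hk => partint l k (Finset.mem_range.mp hl) (Finset.mem_range.mp hk))
    _ = ∑ l ∈ Finset.range a, ∑ k ∈ Finset.range a, (C + if l = k then D - C else 0) := by
        refine Finset.sum_congr rfl fun l hl => Finset.sum_congr rfl fun k hk => ?_
        by_cases hlk : l = k
        · subst hlk
          rw [partdiag l (Finset.mem_range.mp hl)]
          simp
        · rw [part1 l k (Finset.mem_range.mp hl) (Finset.mem_range.mp hk) hlk]
          simp [hlk]
    _ = ∑ l ∈ Finset.range a, ((a : ℝ) * C + (D - C)) := by
        refine Finset.sum_congr rfl fun l hl => ?_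
        rw [Finset.sum_add_distrib, Finset.sum_const, Finset.card_range,
          Finset.sum_ite_eq (Finset.range a) l (fun _ => D - C), if_pos hl,
          nsmul_eq_mul]
    _ = (a : ℝ) * ((a : ℝ) * C + (D - C)) := by
        rw [Finset.sum_const, Finset.card_range, nsmul_eq_mul]
    _ = 3 * a * (((n : ℝ) - b) / ((b : ℝ) * n)) ^ 2
        + (a : ℝ) * ((a : ℝ) - 1) * (3 / (n : ℝ) ^ 2 + 1 / (b : ℝ) ^ 2 - 2 / ((b : ℝ) * n)) := by
        rw [hC, hD]; ring
end
end

section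
/- Let σ̂²_w be the weighted batch means estimator with the Bartlett flat top lag window (even bandwidth b, n = ab). Then σ̂²_w = 2σ̂²_bm - σ̂²_bm^{(2)}, where σ̂²_bm is the (univariate) batch means estimator with batch size b and σ̂²_bm^{(2)} is the batch means estimator with batch size b/2. -/
/-- The Bartlett flat top lag window with (even) bandwidth `b`. -/
noncomputable def flatTop (b : ℕ) (k : ℤ) : ℝ :=
  if |k| ≤ (b : ℤ) / 2 then 1
  else if |k| ≤ (b : ℤ) then 2 * (1 - |(k : ℝ)| / b)
  else 0

/-- Second difference of a lag window. -/
noncomputable def Δ₂ (w : ℤ → ℝ) (k : ℤ) : ℝ := w (k - 1) - 2 * w k + w (k + 1)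

/-- Overall mean of `Y₁, …, Yₙ`. -/
noncomputable def Ybar (Y : ℕ → ℝ) (n : ℕ) : ℝ := (1 / (n : ℝ)) * ∑ t ∈ Finset.range n, Y (t + 1)

/-- Mean of batch `l` of size `k`: `k⁻¹ ∑_{t=1}^{k} Y_{lk+t}`. -/
noncomputable def batchMean (Y : ℕ → ℝ) (k l : ℕ) : ℝ :=
  (1 / (k : ℝ)) * ∑ t ∈ Finset.range k, Y (l * k + t + 1)

/-- Batch means estimator with batch size `k` (where `a_k = ⌊n/k⌋`). -/
noncomputable def bmEst (Y : ℕ → ℝ) (n k : ℕ) : ℝ :=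
  ((k : ℝ) / ((n / k : ℕ) - 1)) *
    ∑ l ∈ Finset.range (n / k), (batchMean Y k l - Ybar Y n) ^ 2

/-- Weighted batch means estimator with lag window `w` and bandwidth `b`. -/
noncomputable def wbmEst (Y : ℕ → ℝ) (w : ℤ → ℝ) (n b : ℕ) : ℝ :=
  ∑ k ∈ Finset.Icc 1 b, (1 / (((n / k : ℕ) : ℝ) - 1)) *
    ∑ l ∈ Finset.range (n / k),
      (k : ℝ) ^ 2 * Δ₂ w (k : ℤ) * (batchMean Y k l - Ybar Y n) ^ 2

lemma flatTop_of_nonneg (b : ℕ) (k : ℤ) (hk : 0 ≤ k) :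
    flatTop b k = if k ≤ (b:ℤ)/2 then 1 else if k ≤ (b:ℤ) then 2*(1 - (k:ℝ)/b) else 0 := by
  unfold flatTop
  rw [abs_of_nonneg hk, abs_of_nonneg (show (0:ℝ) ≤ (k:ℝ) by exact_mod_cast hk)]

lemma flatTop_low (b m : ℕ) (hm : b = 2*m) (k : ℤ) (h0 : 0 ≤ k) (h1 : k ≤ m) :
    flatTop b k = 1 := by
  rw [flatTop_of_nonneg b k h0, if_pos (by omega)]

lemma flatTop_mid (b m : ℕ) (hm : b = 2*m) (hm1 : 1 ≤ m) (k : ℤ)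
    (h0 : (m:ℤ) ≤ k) (h1 : k ≤ (b:ℤ)) :
    flatTop b k = 2*(1 - (k:ℝ)/b) := by
  rw [flatTop_of_nonneg b k (by omega)]
  split_ifs with h2
  · have hk : k = (m:ℤ) := by omega
    subst hk hm
    have : (m:ℝ) ≠ 0 := by positivity
    push_cast
    field_simp
    ring
  · rfl

lemma flatTop_high (b : ℕ) (k : ℤ) (h1 : (b:ℤ) < k) : flatTop b k = 0 := by
  rw [flatTop_of_nonneg b k (by omega), if_neg (by omega), if_neg (by omega)]

lemma d2_zero (b m : ℕ) (hm : b = 2*m) (hm1 : 1 ≤ m) (k : ℕ)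
    (h1 : 1 ≤ k) (h2 : k ≤ b) (h3 : k ≠ m) (h4 : k ≠ b) :
    Δ₂ (flatTop b) (k : ℤ) = 0 := by
  unfold Δ₂
  rcases lt_or_gt_of_ne h3 with h | h
  · rw [flatTop_low b m hm ((k:ℤ)-1) (by omega) (by omega),
        flatTop_low b m hm (k:ℤ) (by omega) (by omega),
        flatTop_low b m hm ((k:ℤ)+1) (by omega) (by omega)]
    ring
  · have hb0 : (b:ℝ) ≠ 0 := by
      have : 0 < b := by omega
      positivity
    rw [flatTop_mid b m hm hm1 ((k:ℤ)-1) (by omega) (by omega),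
        flatTop_mid b m hm hm1 (k:ℤ) (by omega) (by omega),
        flatTop_mid b m hm hm1 ((k:ℤ)+1) (by omega) (by omega)]
    push_cast
    field_simp
    ring

lemma d2_half (b m : ℕ) (hm : b = 2*m) (hm1 : 1 ≤ m) :
    Δ₂ (flatTop b) (m : ℤ) = -2 / b := by
  unfold Δ₂
  have hb0 : (b:ℝ) ≠ 0 := by
    have : 0 < b := by omega
    positivity
  rw [flatTop_low b m hm ((m:ℤ)-1) (by omega) (by omega),
      flatTop_low b m hm (m:ℤ) (by omega) (by omega),
      flatTop_mid b m hm hm1 ((m:ℤ)+1) (by omega) (by omega)]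
  subst hm
  push_cast
  field_simp
  ring

lemma d2_full (b m : ℕ) (hm : b = 2*m) (hm1 : 1 ≤ m) :
    Δ₂ (flatTop b) (b : ℤ) = 2 / b := by
  unfold Δ₂
  have hb0 : (b:ℝ) ≠ 0 := by
    have : 0 < b := by omega
    positivity
  rw [flatTop_mid b m hm hm1 ((b:ℤ)-1) (by omega) (by omega),
      flatTop_mid b m hm hm1 (b:ℤ) (by omega) (by omega),
      flatTop_high b ((b:ℤ)+1) (by omega)]
  push_cast
  field_simp
  ring

theorem weighted_bm_flat_top_eq_two_bm (Y : ℕ → ℝ) (a b n : ℕ)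
    (ha : 2 ≤ a) (hb : 2 ≤ b) (hbe : Even b) (hn : n = a * b) :
    wbmEst Y (flatTop b) n b = 2 * bmEst Y n b - bmEst Y n (b / 2) := by
  obtain ⟨m, hm⟩ := hbe
  have hm' : b = 2 * m := by omega
  have hm1 : 1 ≤ m := by omega
  have hbm : b / 2 = m := by omega
  have hab : n / b = a := by rw [hn]; exact Nat.mul_div_cancel a (show 0 < b by omega)
  have ham : n / m = 2 * a := by
    rw [hn, hm']
    rw [show a * (2 * m) = (2 * a) * m by ring]
    exact Nat.mul_div_cancel (2*a) (show 0 < m by omega)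
  -- the summand function
  set f : ℕ → ℝ := fun k => (1 / (((n / k : ℕ) : ℝ) - 1)) *
    ∑ l ∈ Finset.range (n / k),
      (k : ℝ) ^ 2 * Δ₂ (flatTop b) (k : ℤ) * (batchMean Y k l - Ybar Y n) ^ 2 with hf
  have hsum : wbmEst Y (flatTop b) n b = f m + f b := by
    rw [wbmEst]
    have hsub : ({m, b} : Finset ℕ) ⊆ Finset.Icc 1 b := by
      intro x hx
      simp only [Finset.mem_insert, Finset.mem_singleton] at hx
      rcases hx with h | h <;> simp [h] <;> omega
    rw [← Finset.sum_subset hsub]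
    · rw [Finset.sum_pair (show m ≠ b by omega)]
    · intro x hx hx2
      simp only [Finset.mem_Icc] at hx
      simp only [Finset.mem_insert, Finset.mem_singleton, not_or] at hx2
      rw [d2_zero b m hm' hm1 x hx.1 hx.2 hx2.1 hx2.2]
      simp
  rw [hsum, hf]
  simp only [hbm, hab, ham, d2_half b m hm' hm1, d2_full b m hm' hm1]
  rw [bmEst, bmEst]
  simp only [hab, ham]
  rw [← Finset.mul_sum, ← Finset.mul_sum]
  have hb0 : (b:ℝ) ≠ 0 := by
    have : 0 < b := by omega
    positivity
  have hm0 : (m:ℝ) ≠ 0 := by positivity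
  have ha1 : ((a:ℝ) - 1) ≠ 0 := by
    have : (2:ℝ) ≤ a := by exact_mod_cast ha
    nlinarith
  have ha2 : (((2*a : ℕ):ℝ) - 1) ≠ 0 := by
    have : (2:ℝ) ≤ a := by exact_mod_cast ha
    push_cast
    nlinarith
  push_cast at ha2 ⊢
  rw [hm']
  push_cast
  field_simp
  ring
end
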